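/- Let f : ℝ^n × ℝ^m → ℝ^n be C¹ on an open neighborhood of (0,0) with f(0,0) = 0. If the control system ẋ = f(x,u) is locally exponentially stabilizable by means of continuously differentiable stationary feedback laws, then f is linearly open around (0,0). -/

import Mathlib

open Metric Set Filter

noncomputable section

/-- `ℝ^n` with the Euclidean norm. -/
abbrev Euc (n : ℕ) : Type := EuclideanSpace ℝ (Fin n)

/-- `ℝ^n × ℝ^m` identified with `ℝ^{n+m}` with its Euclidean norm. -/
abbrev EucProd (n m : ℕ) : Type := WithLp 2 (Euc n × Euc m)

/-- Build a point of `ℝ^n × ℝ^m`. -/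
def mkProd {n m : ℕ} (x : Euc n) (u : Euc m) : EucProd n m :=
  (WithLp.equiv 2 (Euc n × Euc m)).symm (x, u)

def pFst {n m : ℕ} (p : EucProd n m) : Euc n := ((WithLp.equiv 2 (Euc n × Euc m)) p).1

def pSnd {n m : ℕ} (p : EucProd n m) : Euc m := ((WithLp.equiv 2 (Euc n × Euc m)) p).2

/-- View a plain vector as a point of Euclidean space. -/
def vecE {n : ℕ} (v : Fin n → ℝ) : Euc n := WithLp.toLp 2 v

/-- `f` is linearly open around `z` with modulus `κ > 0`: on some neighborhood `U` of `z`,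
`B_{κ r}(f w) ⊆ f (B_r w)` whenever `w ∈ U`, `r > 0`, and `B_r w ⊆ U`. -/
def LinOpenWith {E F : Type*} [NormedAddCommGroup E] [NormedAddCommGroup F]
    (f : E → F) (z : E) (κ : ℝ) : Prop :=
  0 < κ ∧ ∃ U ∈ nhds z, ∀ w ∈ U, ∀ r : ℝ, 0 < r → closedBall w r ⊆ U →
      closedBall (f w) (κ * r) ⊆ f '' closedBall w r

/-- `f` is linearly open around `z` (with some modulus `κ > 0`). -/
def LinOpenAround {E F : Type*} [NormedAddCommGroup E] [NormedAddCommGroup F]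
    (f : E → F) (z : E) : Prop :=
  ∃ κ : ℝ, LinOpenWith f z κ

/-- `f` is `C¹` on an open neighborhood of `z`. -/
def C1Near {E F : Type*} [NormedAddCommGroup E] [NormedSpace ℝ E]
    [NormedAddCommGroup F] [NormedSpace ℝ F] (f : E → F) (z : E) : Prop :=
  ∃ U : Set E, IsOpen U ∧ z ∈ U ∧ ContDiffOn ℝ 1 f U

/-- The partial Jacobian matrix `A = ∂f/∂x(0,0)`. -/
def xJac {n m : ℕ} (f : EucProd n m → Euc n) : Matrix (Fin n) (Fin n) ℝ :=
  Matrix.of fun i j => fderiv ℝ f 0 (mkProd (EuclideanSpace.single j 1) 0) i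

/-- The partial Jacobian matrix `B = ∂f/∂u(0,0)`. -/
def uJac {n m : ℕ} (f : EucProd n m → Euc n) : Matrix (Fin n) (Fin m) ℝ :=
  Matrix.of fun i j => fderiv ℝ f 0 (mkProd 0 (EuclideanSpace.single j 1)) i

/-- The set of complex eigenvalues of a real matrix. -/
def specC {n : ℕ} (A : Matrix (Fin n) (Fin n) ℝ) : Set ℂ :=
  spectrum ℂ (A.map (Complex.ofReal : ℝ → ℂ))

/-- Local exponential stabilizability of `ẋ = f(x,u)` by stationary feedback laws
satisfying the regularity predicate `P`. -/
def ExpStabWith {n m : ℕ} (f : EucProd n m → Euc n) (P : (Euc n → Euc m) → Prop) : Prop :=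
  ∃ u : Euc n → Euc m, P u ∧ u 0 = 0 ∧
    ∃ α : ℝ, 0 < α ∧ ∃ M : ℝ, 0 < M ∧ ∃ δ : ℝ, 0 < δ ∧
      ∀ x₀ : Euc n, ‖x₀‖ < δ →
        ∃ x : ℝ → Euc n,
          (x 0 = x₀ ∧
            ∀ t ∈ Ici (0:ℝ), HasDerivWithinAt x (f (mkProd (x t) (u (x t)))) (Ici 0) t) ∧
          (∀ y : ℝ → Euc n,
            (y 0 = x₀ ∧
              ∀ t ∈ Ici (0:ℝ), HasDerivWithinAt y (f (mkProd (y t) (u (y t)))) (Ici 0) t) →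
            ∀ t ∈ Ici (0:ℝ), y t = x t) ∧
          ∀ t ∈ Ici (0:ℝ), ‖x t‖ ≤ M * Real.exp (-α * t) * ‖x₀‖

/-- Local exponential stabilizability by continuous stationary feedback laws. -/
def ExpStabCont {n m : ℕ} (f : EucProd n m → Euc n) : Prop :=
  ExpStabWith f Continuous

/-- Local exponential stabilizability by `C¹` stationary feedback laws. -/
def ExpStabC1 {n m : ℕ} (f : EucProd n m → Euc n) : Prop :=
  ExpStabWith f (fun u => ContDiff ℝ 1 u)

/-- Local asymptotic stabilizability of `ẋ = f(x,u)` by `C¹` stationary feedback laws. -/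
def AsympStabC1 {n m : ℕ} (f : EucProd n m → Euc n) : Prop :=
  ∃ u : Euc n → Euc m, ContDiff ℝ 1 u ∧ u 0 = 0 ∧
    ((∀ ε : ℝ, 0 < ε → ∃ δ : ℝ, 0 < δ ∧ ∀ x : ℝ → Euc n, ‖x 0‖ < δ →
        (∀ t ∈ Ici (0:ℝ), HasDerivWithinAt x (f (mkProd (x t) (u (x t)))) (Ici 0) t) →
        ∀ t ∈ Ici (0:ℝ), ‖x t‖ < ε) ∧
      ∃ δ₀ : ℝ, 0 < δ₀ ∧ ∀ x : ℝ → Euc n, ‖x 0‖ < δ₀ →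
        (∀ t ∈ Ici (0:ℝ), HasDerivWithinAt x (f (mkProd (x t) (u (x t)))) (Ici 0) t) →
        Tendsto x atTop (nhds 0))

/-- Local asymptotic stabilizability of the discrete-time system `x_{k+1} = f(x_k,u_k)`
by continuous stationary feedback laws. -/
def DiscAsympStabCont {n m : ℕ} (f : EucProd n m → Euc n) : Prop :=
  ∃ u : Euc n → Euc m, Continuous u ∧ u 0 = 0 ∧
    ((∀ ε : ℝ, 0 < ε → ∃ δ : ℝ, 0 < δ ∧ ∀ x₀ : Euc n, ‖x₀‖ < δ →
        ∀ k : ℕ, ‖(fun x => f (mkProd x (u x)))^[k] x₀‖ < ε) ∧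
      ∃ δ₀ : ℝ, 0 < δ₀ ∧ ∀ x₀ : Euc n, ‖x₀‖ < δ₀ →
        Tendsto (fun k => (fun x => f (mkProd x (u x)))^[k] x₀) atTop (nhds 0))

section Aux
open scoped RealInnerProductSpace Topology

theorem linOpen_aux {E F : Type*} [NormedAddCommGroup E] [NormedSpace ℝ E] [CompleteSpace E]
    [NormedAddCommGroup F] [NormedSpace ℝ F] [CompleteSpace F]
    {f : E → F} {z : E} {L : E →L[ℝ] F}
    (hd : HasStrictFDerivAt f L z) (hsurj : LinearMap.range (L : E →ₗ[ℝ] F) = ⊤) :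
    ∃ κ : ℝ, 0 < κ ∧ ∃ U ∈ nhds z, ∀ w ∈ U, ∀ r : ℝ, 0 < r → closedBall w r ⊆ U →
      closedBall (f w) (κ * r) ⊆ f '' closedBall w r := by
  obtain ⟨fsymm, hN⟩ := L.exists_nonlinearRightInverse_of_surjective hsurj
  set c : NNReal := fsymm.nnnorm⁻¹ / 2 with hc
  have hcpos : (0:NNReal) < c := by positivity
  obtain ⟨s, hs, happrox⟩ := hd.approximates_deriv_on_nhds (Or.inr hcpos)
  obtain ⟨R, hR, hball⟩ := Metric.mem_nhds_iff.1 hs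
  refine ⟨(fsymm.nnnorm : ℝ)⁻¹ / 2, by positivity, ball z R, ball_mem_nhds _ hR, ?_⟩
  intro w hw r hr hsub
  have h2 : ApproximatesLinearOn f L (closedBall w r) c :=
    happrox.mono_set (hsub.trans hball)
  have h3 := h2.surjOn_closedBall_of_nonlinearRightInverse fsymm hr.le subset_rfl
  have hkey : ((fsymm.nnnorm : ℝ)⁻¹ - (c:ℝ)) = (fsymm.nnnorm : ℝ)⁻¹ / 2 := by
    rw [hc]; push_cast; ring
  rw [hkey] at h3
  exact fun y hy => h3 hy

theorem ode_est {n : ℕ} {α M ρ ε : ℝ} (hα : 0 < α) (hM : 0 < M) (hε : 0 < ε)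
    {p x₀ : Euc n} {g : Euc n → Euc n} {x : ℝ → Euc n}
    (hx0 : x 0 = x₀)
    (hder : ∀ t ∈ Ici (0:ℝ), HasDerivWithinAt x (g (x t)) (Ici 0) t)
    (hbound : ∀ t ∈ Ici (0:ℝ), ‖x t‖ ≤ M * Real.exp (-α * t) * ‖x₀‖)
    (hρ : M * ‖x₀‖ ≤ ρ)
    (hφ : ∀ y : Euc n, ‖y‖ ≤ ρ → |⟪p, g y⟫| ≤ ε * ‖y‖) :
    |⟪p, x₀⟫| ≤ ε * M * ‖x₀‖ / α := by
  set C : ℝ := ε * M * ‖x₀‖ with hC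
  have hC0 : 0 ≤ C := by positivity
  have hexple : ∀ t : ℝ, 0 ≤ t → Real.exp (-α * t) ≤ 1 := fun t ht =>
    Real.exp_le_one_iff.2 (by nlinarith)
  have hxle : ∀ t ∈ Ici (0:ℝ), ‖x t‖ ≤ ρ := by
    intro t ht
    calc ‖x t‖ ≤ M * Real.exp (-α * t) * ‖x₀‖ := hbound t ht
    _ ≤ M * 1 * ‖x₀‖ := by
        apply mul_le_mul_of_nonneg_right _ (norm_nonneg _)
        exact mul_le_mul_of_nonneg_left (hexple t ht) hM.le
    _ ≤ ρ := by simpa using hρ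
  have hφx : ∀ t ∈ Ici (0:ℝ), |⟪p, g (x t)⟫| ≤ C * Real.exp (-α * t) := by
    intro t ht
    calc |⟪p, g (x t)⟫| ≤ ε * ‖x t‖ := hφ _ (hxle t ht)
    _ ≤ ε * (M * Real.exp (-α * t) * ‖x₀‖) :=
        mul_le_mul_of_nonneg_left (hbound t ht) hε.le
    _ = C * Real.exp (-α * t) := by rw [hC]; ring
  set h : ℝ → ℝ := fun t => ⟪p, x t⟫ with hh
  have hhd : ∀ t ∈ Ici (0:ℝ), HasDerivWithinAt h ⟪p, g (x t)⟫ (Ici 0) t := by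
    intro t ht
    exact (innerSL ℝ p).hasFDerivAt.comp_hasDerivWithinAt t (hder t ht)
  set w : ℝ → ℝ := fun t => (C / α) * Real.exp (-α * t) with hw
  have hwd : ∀ t : ℝ, HasDerivAt w (-C * Real.exp (-α * t)) t := by
    intro t
    have h1 : HasDerivAt (fun s : ℝ => -α * s) (-α) t := by
      simpa using (hasDerivAt_id t).const_mul (-α)
    have h2 := (h1.exp).const_mul (C / α)
    convert h2 using 1
    · rfl
    · rfl
    field_simp
  have hexp0 : Tendsto (fun t : ℝ => Real.exp (-α * t)) atTop (𝓝 0) := by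
    apply Real.tendsto_exp_atBot.comp
    have h1 : Tendsto (fun t : ℝ => α * t) atTop atTop := tendsto_id.const_mul_atTop hα
    have h2 : Tendsto (fun t : ℝ => -(α * t)) atTop atBot := tendsto_neg_atTop_atBot.comp h1
    exact h2.congr fun t => by ring
  have hxtend : Tendsto (fun t => ‖x t‖) atTop (𝓝 0) := by
    apply squeeze_zero_norm' (a := fun t => M * Real.exp (-α * t) * ‖x₀‖)
    · filter_upwards [eventually_ge_atTop (0:ℝ)] with t ht
      simpa using hbound t ht
    · have : Tendsto (fun t : ℝ => M * Real.exp (-α * t) * ‖x₀‖) atTop (𝓝 (M * 0 * ‖x₀‖)) :=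
        (hexp0.const_mul M).mul_const _
      simpa using this
  have hhtend : Tendsto h atTop (𝓝 0) := by
    apply squeeze_zero_norm' (a := fun t => ‖p‖ * ‖x t‖)
    · filter_upwards with t
      exact abs_real_inner_le_norm p (x t)
    · simpa using hxtend.const_mul ‖p‖
  have hwtend : Tendsto w atTop (𝓝 0) := by
    have := hexp0.const_mul (C / α)
    simpa [hw] using this
  have hcont : ContinuousOn h (Ici 0) := fun t ht => (hhd t ht).continuousWithinAt
  have hwcont : Continuous w := by fun_prop
  -- F1 = h + w antitone, F2 = w - h antitone
  have key : ∀ sgn : ℝ, sgn = 1 ∨ sgn = -1 →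
      0 ≤ sgn * h 0 + w 0 := by
    intro sgn hsgn
    have hant : AntitoneOn (fun t => sgn * h t + w t) (Ici 0) := by
      apply antitoneOn_of_hasDerivWithinAt_nonpos (convex_Ici 0)
        (f' := fun t => sgn * ⟪p, g (x t)⟫ + -C * Real.exp (-α * t))
      · exact (continuousOn_const.mul hcont).add hwcont.continuousOn
      · intro t ht
        rw [interior_Ici] at ht ⊢
        exact (((hhd t (Ioi_subset_Ici_self ht)).const_mul sgn).add
          ((hwd t).hasDerivWithinAt)).mono Ioi_subset_Ici_self
      · intro t ht
        rw [interior_Ici] at ht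
        have h1 := hφx t (Ioi_subset_Ici_self ht)
        have h2 : sgn * ⟪p, g (x t)⟫ ≤ |⟪p, g (x t)⟫| := by
          rcases hsgn with h | h
          · rw [h, one_mul]; exact le_abs_self _
          · rw [h]; simpa using neg_le_abs ⟪p, g (x t)⟫
        linarith [abs_nonneg ⟪p, g (x t)⟫]
    have htend : Tendsto (fun t => sgn * h t + w t) atTop (𝓝 0) := by
      have := (hhtend.const_mul sgn).add hwtend
      simpa using this
    refine le_of_tendsto htend ?_
    filter_upwards [eventually_ge_atTop (0:ℝ)] with s hs
    exact hant self_mem_Ici hs hs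
  have k1 := key 1 (Or.inl rfl)
  have k2 := key (-1) (Or.inr rfl)
  have hw0 : w 0 = C / α := by simp [hw]
  have hh0 : h 0 = ⟪p, x₀⟫ := by simp [hh, hx0]
  rw [hw0, hh0] at k1 k2
  rw [abs_le]
  constructor <;> nlinarith [k1, k2]

open scoped RealInnerProductSpace in
theorem littleO {n m : ℕ} (f : EucProd n m → Euc n) (u : Euc n → Euc m)
    (hfd : DifferentiableAt ℝ f 0) (hf0 : f 0 = 0)
    (hu : ContDiff ℝ 1 u) (hu0 : u 0 = 0) (p : Euc n)
    (hp : p ∈ (LinearMap.range (fderiv ℝ f 0 : EucProd n m →ₗ[ℝ] Euc n))ᗮ) :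
    (fun x : Euc n => ⟪p, f (mkProd x (u x))⟫) =o[nhds 0] fun x => x := by
  set L := fderiv ℝ f 0 with hL
  set j : Euc n → EucProd n m := fun x => mkProd x (u x) with hj
  have hj0 : j 0 = 0 := by simp [hj, hu0, mkProd]
  have hjd : DifferentiableAt ℝ j 0 := by
    have : j = fun x => (WithLp.prodContinuousLinearEquiv 2 ℝ (Euc n) (Euc m)).symm (x, u x) := rfl
    rw [this]
    exact (WithLp.prodContinuousLinearEquiv 2 ℝ (Euc n) (Euc m)).symm.differentiable.differentiableAt.comp 0
      (differentiableAt_id.prodMk (hu.differentiable one_ne_zero).differentiableAt)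
  set J := fderiv ℝ j 0 with hJ
  have hgd : HasFDerivAt (fun x => f (j x)) (L.comp J) 0 := by
    have h1 : HasFDerivAt f L (j 0) := by rw [hj0]; exact hfd.hasFDerivAt
    exact h1.comp 0 hjd.hasFDerivAt
  have hφd : HasFDerivAt (fun x : Euc n => ⟪p, f (j x)⟫)
      ((innerSL ℝ p).comp (L.comp J)) 0 :=
    (innerSL ℝ p).hasFDerivAt.comp 0 hgd
  have hzero : ((innerSL ℝ p).comp (L.comp J)) = 0 := by
    ext v
    have := (Submodule.mem_orthogonal _ p).1 hp (L (J v)) ⟨J v, rfl⟩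
    rw [real_inner_comm] at this; simpa using this
  rw [hzero] at hφd
  have := hφd.isLittleO
  simpa [hj0, hf0] using this

theorem jac_surj {n m : ℕ} (f : EucProd n m → Euc n)
    (hU : ∃ U : Set (EucProd n m), IsOpen U ∧ 0 ∈ U ∧ ContDiffOn ℝ 1 f U) (hf0 : f 0 = 0)
    (hstab : ∃ u : Euc n → Euc m, ContDiff ℝ 1 u ∧ u 0 = 0 ∧
      ∃ α : ℝ, 0 < α ∧ ∃ M : ℝ, 0 < M ∧ ∃ δ : ℝ, 0 < δ ∧
        ∀ x₀ : Euc n, ‖x₀‖ < δ →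
          ∃ x : ℝ → Euc n,
            (x 0 = x₀ ∧
              ∀ t ∈ Ici (0:ℝ), HasDerivWithinAt x (f (mkProd (x t) (u (x t)))) (Ici 0) t) ∧
            (∀ y : ℝ → Euc n,
              (y 0 = x₀ ∧
                ∀ t ∈ Ici (0:ℝ), HasDerivWithinAt y (f (mkProd (y t) (u (y t)))) (Ici 0) t) →
              ∀ t ∈ Ici (0:ℝ), y t = x t) ∧
            ∀ t ∈ Ici (0:ℝ), ‖x t‖ ≤ M * Real.exp (-α * t) * ‖x₀‖) :
    LinearMap.range (fderiv ℝ f 0 : EucProd n m →ₗ[ℝ] Euc n) = ⊤ := by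
  obtain ⟨U, hUo, hU0, hfC⟩ := hU
  have hfd : DifferentiableAt ℝ f 0 :=
    (hfC.contDiffAt (hUo.mem_nhds hU0)).differentiableAt one_ne_zero
  by_contra hne
  have hob : (LinearMap.range (fderiv ℝ f 0 : EucProd n m →ₗ[ℝ] Euc n))ᗮ ≠ ⊥ := by
    intro hbot
    exact hne (Submodule.orthogonal_eq_bot_iff.1 hbot)
  obtain ⟨p, hp, hpne⟩ := Submodule.exists_mem_ne_zero_of_ne_bot hob
  obtain ⟨u, hu, hu0, α, hα, M, hM, δ, hδ, hsol⟩ := hstab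
  have hlo := littleO f u hfd hf0 hu hu0 p hp
  have hpn : (0:ℝ) < ‖p‖ := norm_pos_iff.2 hpne
  have main : ∀ ε : ℝ, 0 < ε → ‖p‖ ≤ ε * M / α := by
    intro ε hε
    have hev := (hlo.def hε)
    rw [Metric.eventually_nhds_iff] at hev
    obtain ⟨ρ, hρ, hball⟩ := hev
    set c := min (δ / (2 * ‖p‖)) (ρ / (2 * M * ‖p‖)) with hc
    have hc0 : 0 < c := lt_min (by positivity) (by positivity)
    set x₀ := c • p with hx₀def
    have hnx : ‖x₀‖ = c * ‖p‖ := by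
      rw [hx₀def, norm_smul, Real.norm_eq_abs, abs_of_pos hc0]
    have h1 : ‖x₀‖ < δ := by
      rw [hnx]
      calc c * ‖p‖ ≤ (δ / (2 * ‖p‖)) * ‖p‖ :=
            mul_le_mul_of_nonneg_right (min_le_left _ _) hpn.le
        _ = δ / 2 := by field_simp
        _ < δ := by linarith
    have h2 : M * ‖x₀‖ ≤ ρ / 2 := by
      rw [hnx]
      calc M * (c * ‖p‖) ≤ M * ((ρ / (2 * M * ‖p‖)) * ‖p‖) := by
            apply mul_le_mul_of_nonneg_left _ hM.le
            exact mul_le_mul_of_nonneg_right (min_le_right _ _) hpn.le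
        _ = ρ / 2 := by field_simp
    obtain ⟨x, ⟨hx0, hxd⟩, -, hxb⟩ := hsol x₀ h1
    have hφ : ∀ y : Euc n, ‖y‖ ≤ ρ / 2 → |⟪p, f (mkProd y (u y))⟫| ≤ ε * ‖y‖ := by
      intro y hy
      have := hball (y := y) (by rw [dist_zero_right]; linarith)
      simpa using this
    have hest := ode_est (g := fun y => f (mkProd y (u y))) hα hM hε hx0 hxd hxb h2 hφ
    have hinner : ⟪p, x₀⟫ = c * ‖p‖ ^ 2 := by
      rw [hx₀def, real_inner_smul_right, real_inner_self_eq_norm_sq]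
    rw [hinner, hnx, abs_of_pos (by positivity)] at hest
    have hcp : 0 < c * ‖p‖ := by positivity
    rw [le_div_iff₀ hα] at hest ⊢
    nlinarith [hest, hcp, mul_pos hc0 hpn]
  have hfin : ‖p‖ ≤ 0 := by
    by_contra hcon
    push_neg at hcon
    have := main (α * ‖p‖ / (2 * M)) (by positivity)
    have heq : α * ‖p‖ / (2 * M) * M / α = ‖p‖ / 2 := by
      field_simp
    rw [heq] at this
    linarith
  exact hpne (norm_le_zero_iff.1 hfin)

end Aux

/-- local exponential stabilizability by `C¹` stationary feedback laws implies
linear openness of `f` around `(0,0)`. -/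
theorem linear_openness_of_exp_stabilizable {n m : ℕ} (f : EucProd n m → Euc n)
    (hf : C1Near f 0) (hf0 : f 0 = 0)
    (hstab : ExpStabC1 f) :
    LinOpenAround f 0 := by
  obtain ⟨V, hVo, hV0, hfC⟩ := hf
  have hstrict : HasStrictFDerivAt f (fderiv ℝ f 0) 0 :=
    (hfC.contDiffAt (hVo.mem_nhds hV0)).hasStrictFDerivAt one_ne_zero
  have hsurj := jac_surj f ⟨V, hVo, hV0, hfC⟩ hf0 hstab
  exact linOpen_aux hstrict hsurj
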